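/- Let Γ be a finitely generated amenable group with Følner sequence {F(n)}, ρ an action on a compact space V, and α a finite open cover. Then the limit lim_n log S_0(α_{F(n)}) / |F(n)| exists, where α_F = ⋂_{γ∈F} ρ(γ)^{-1}α and S_0(β) is the minimal cardinality of an open cover refining β. -/

import Mathlib

open scoped Classical
open Filter

variable {V : Type*} [TopologicalSpace V]

/-- A finite open cover of `V`. -/
def IsFinOpenCover (α : Finset (Set V)) : Prop :=
  (∀ A ∈ α, IsOpen A) ∧ ⋃₀ (α : Set (Set V)) = Set.univ

/-- `β` refines `α`. -/
def Refines (β α : Finset (Set V)) : Prop :=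
  ∀ B ∈ β, ∃ A ∈ α, B ⊆ A

/-- `S₀ γ`: the minimal cardinality of a finite open cover refining `γ`. -/
noncomputable def S0 (γ : Finset (Set V)) : ℕ :=
  sInf {n | ∃ δ : Finset (Set V), IsFinOpenCover δ ∧ Refines δ γ ∧ δ.card = n}

/-- The refinement `α_F = ⋂_{γ ∈ F} ρ(γ)⁻¹ α` of a finite open cover `α` under
the action `ρ`: its members are intersections over `F` of pullbacks of members
of `α`. -/
noncomputable def pullCover {Γ : Type*} (ρ : Γ → (V ≃ₜ V)) (F : Finset Γ)
    (α : Finset (Set V)) : Finset (Set V) :=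
  (F.pi fun _ => α).image fun c =>
    ⋂ γ, ⋂ (h : γ ∈ F), (ρ γ : V → V) ⁻¹' c γ h

section FinsetGroup
variable {G : Type*} [Group G]

variable {G : Type*} [Group G]

/-- right translate of a finite set -/
noncomputable def trF (T : Finset G) (c : G) : Finset G := T.image (· * c)
/-- product set -/
noncomputable def mulF (K B : Finset G) : Finset G := K.biUnion fun g => B.image (fun y => g * y)
/-- inverse set -/
noncomputable def invF (T : Finset G) : Finset G := T.image (·⁻¹)
/-- T-interior of A : {a | T a ⊆ A} -/
noncomputable def intF (T A : Finset G) : Finset G :=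
  (mulF (invF T) A).filter (fun a => ∀ t ∈ T, t * a ∈ A)

lemma mem_trF {T : Finset G} {c x : G} : x ∈ trF T c ↔ ∃ t ∈ T, t * c = x := by
  constructor
  · intro h; obtain ⟨t, ht, rfl⟩ := Finset.mem_image.mp h; exact ⟨t, ht, rfl⟩
  · rintro ⟨t, ht, rfl⟩; exact Finset.mem_image_of_mem _ ht

lemma card_trF (T : Finset G) (c : G) : (trF T c).card = T.card :=
  Finset.card_image_of_injective _ (mul_left_injective c)

lemma mem_mulF {K B : Finset G} {x : G} : x ∈ mulF K B ↔ ∃ g ∈ K, ∃ y ∈ B, g * y = x := by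
  constructor
  · intro h
    obtain ⟨g, hg, h2⟩ := Finset.mem_biUnion.mp h
    obtain ⟨y, hy, rfl⟩ := Finset.mem_image.mp h2
    exact ⟨g, hg, y, hy, rfl⟩
  · rintro ⟨g, hg, y, hy, rfl⟩
    exact Finset.mem_biUnion.mpr ⟨g, hg, Finset.mem_image_of_mem _ hy⟩

lemma mem_intF {T A : Finset G} (hT : T.Nonempty) {a : G} :
    a ∈ intF T A ↔ ∀ t ∈ T, t * a ∈ A := by
  constructor
  · intro h; exact (Finset.mem_filter.mp h).2
  · intro h
    refine Finset.mem_filter.mpr ⟨?_, h⟩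
    obtain ⟨t, ht⟩ := hT
    exact mem_mulF.mpr ⟨t⁻¹, Finset.mem_image_of_mem _ ht, t * a, h t ht, by group⟩

lemma trF_subset_iff {T A : Finset G} {a : G} : trF T a ⊆ A ↔ ∀ t ∈ T, t * a ∈ A := by
  constructor
  · intro h t ht; exact h (mem_trF.mpr ⟨t, ht, rfl⟩)
  · intro h x hx; obtain ⟨t, ht, rfl⟩ := mem_trF.mp hx; exact h t ht

lemma mulF_trF (K T : Finset G) (c : G) : mulF K (trF T c) = trF (mulF K T) c := by
  ext x
  constructor
  · intro hx
    obtain ⟨g, hg, y, hy, rfl⟩ := mem_mulF.mp hx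
    obtain ⟨t, ht, rfl⟩ := mem_trF.mp hy
    exact mem_trF.mpr ⟨g * t, mem_mulF.mpr ⟨g, hg, t, ht, rfl⟩, by group⟩
  · intro hx
    obtain ⟨u, hu, rfl⟩ := mem_trF.mp hx
    obtain ⟨g, hg, t, ht, rfl⟩ := mem_mulF.mp hu
    exact mem_mulF.mpr ⟨g, hg, t * c, mem_trF.mpr ⟨t, ht, rfl⟩, by group⟩

lemma card_mulF_le (K T : Finset G) : (mulF K T).card ≤ K.card * T.card := by
  calc (mulF K T).card ≤ ∑ g ∈ K, (T.image (fun y => g * y)).card := Finset.card_biUnion_le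
    _ ≤ ∑ _g ∈ K, T.card := Finset.sum_le_sum fun g _ => Finset.card_image_le
    _ = K.card * T.card := by rw [Finset.sum_const, smul_eq_mul]

lemma mulF_biUnion_subset {ι : Type*} (K : Finset G) (P : Finset ι) (u : ι → Finset G) :
    mulF K (P.biUnion u) ⊆ P.biUnion fun p => mulF K (u p) := by
  intro x hx
  obtain ⟨g, hg, y, hy, rfl⟩ := mem_mulF.mp hx
  obtain ⟨p, hp, hyp⟩ := Finset.mem_biUnion.mp hy
  exact Finset.mem_biUnion.mpr ⟨p, hp, mem_mulF.mpr ⟨g, hg, y, hyp, rfl⟩⟩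


lemma maximal_bound (T R U : Finset G) (hT : T.Nonempty) {ε : ℝ}
    (h : ∀ a ∈ intF T R, (((trF T a) \ U).card : ℝ) < (1 - ε) * T.card) :
    ε * ((intF T R).card : ℝ) ≤ U.card := by
  set I := intF T R with hI
  have key : ∀ a ∈ I, ε * T.card ≤ (((trF T a) ∩ U).card : ℝ) := by
    intro a ha
    have h1 : ((trF T a) \ U).card + ((trF T a) ∩ U).card = T.card := by
      rw [Finset.card_sdiff_add_card_inter, card_trF]
    have h2 := h a ha
    have h1' : (((trF T a) \ U).card : ℝ) + (((trF T a) ∩ U).card : ℝ) = (T.card : ℝ) := by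
      exact_mod_cast h1
    nlinarith [Nat.cast_nonneg (α := ℝ) (((trF T a) ∩ U).card)]
  have swap : ∑ a ∈ I, (((trF T a) ∩ U).card) = ∑ u ∈ U, (I.filter fun a => u ∈ trF T a).card := by
    have e1 : ∀ a : G, ((trF T a) ∩ U).card = ∑ u ∈ U, if u ∈ trF T a then 1 else 0 := by
      intro a
      rw [← Finset.card_filter]
      congr 1
      rw [Finset.filter_mem_eq_inter, Finset.inter_comm]
    have e2 : ∀ u : G, (I.filter fun a => u ∈ trF T a).card
        = ∑ a ∈ I, if u ∈ trF T a then 1 else 0 := fun u => Finset.card_filter _ _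
    simp only [e1, e2]
    exact Finset.sum_comm
  have hfib : ∀ u : G, (I.filter fun a => u ∈ trF T a).card ≤ T.card := by
    intro u
    have hsub : (I.filter fun a => u ∈ trF T a) ⊆ T.image (fun t => t⁻¹ * u) := by
      intro a ha
      obtain ⟨-, hu⟩ := Finset.mem_filter.mp ha
      obtain ⟨t, ht, htu⟩ := mem_trF.mp hu
      exact Finset.mem_image.mpr ⟨t, ht, by rw [← htu]; group⟩
    exact le_trans (Finset.card_le_card hsub) Finset.card_image_le
  have hsum : ∑ a ∈ I, (((trF T a) ∩ U).card : ℝ) ≤ (T.card : ℝ) * U.card := by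
    have : (∑ a ∈ I, ((trF T a) ∩ U).card : ℕ) ≤ U.card * T.card := by
      rw [swap]
      calc ∑ u ∈ U, (I.filter fun a => u ∈ trF T a).card ≤ ∑ _u ∈ U, T.card :=
            Finset.sum_le_sum fun u _ => hfib u
        _ = U.card * T.card := by rw [Finset.sum_const, smul_eq_mul]
    calc ∑ a ∈ I, (((trF T a) ∩ U).card : ℝ) = ((∑ a ∈ I, ((trF T a) ∩ U).card : ℕ) : ℝ) := by
          push_cast; ring
      _ ≤ ((U.card * T.card : ℕ) : ℝ) := by exact_mod_cast this
      _ = (T.card : ℝ) * U.card := by push_cast; ring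
  have hlow : ε * (T.card : ℝ) * I.card ≤ ∑ a ∈ I, (((trF T a) ∩ U).card : ℝ) := by
    calc ε * (T.card : ℝ) * I.card = ∑ _a ∈ I, ε * (T.card : ℝ) := by
          rw [Finset.sum_const, nsmul_eq_mul]; ring
      _ ≤ _ := Finset.sum_le_sum key
  have hTpos : (0 : ℝ) < T.card := by exact_mod_cast Finset.card_pos.mpr hT
  nlinarith [hlow.trans hsum]

lemma greedy_cover (T R : Finset G) (hT : T.Nonempty) {ε : ℝ} (hε0 : 0 < ε) (hε1 : ε < 1) :
    ∃ C : Finset G, (∀ c ∈ C, trF T c ⊆ R) ∧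
      (1 - ε) * T.card * C.card ≤ ((C.biUnion fun c => trF T c).card : ℝ) ∧
      ε * ((intF T R).card : ℝ) ≤ ((C.biUnion fun c => trF T c).card : ℝ) := by
  have hTpos : (0 : ℝ) < T.card := by exact_mod_cast Finset.card_pos.mpr hT
  suffices haux : ∀ N : ℕ, ∀ C₀ : Finset G, (∀ c ∈ C₀, trF T c ⊆ R) →
      ((1 - ε) * T.card * C₀.card ≤ ((C₀.biUnion fun c => trF T c).card : ℝ)) →
      (R \ (C₀.biUnion fun c => trF T c)).card ≤ N →
      ∃ C : Finset G, (∀ c ∈ C, trF T c ⊆ R) ∧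
        (1 - ε) * T.card * C.card ≤ ((C.biUnion fun c => trF T c).card : ℝ) ∧
        ε * ((intF T R).card : ℝ) ≤ ((C.biUnion fun c => trF T c).card : ℝ) by
    exact haux (R \ (∅ : Finset G).biUnion (fun c => trF T c)).card ∅ (by simp)
      (by simp) le_rfl
  intro N
  induction N using Nat.strong_induction_on with
  | _ N ih =>
    intro C₀ h1 h2 h3
    set U₀ := C₀.biUnion fun c => trF T c with hU₀
    by_cases hex : ∃ a, trF T a ⊆ R ∧ (1 - ε) * T.card ≤ (((trF T a) \ U₀).card : ℝ)
    · obtain ⟨a, haR, hbig⟩ := hex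
      have hpos : 0 < (((trF T a) \ U₀).card : ℝ) := lt_of_lt_of_le (by nlinarith) hbig
      have hne' : ((trF T a) \ U₀).Nonempty := Finset.card_pos.mp (by exact_mod_cast hpos)
      have haC : a ∉ C₀ := by
        intro hmem
        have hsub : trF T a ⊆ U₀ := Finset.subset_biUnion_of_mem _ hmem
        have : (trF T a) \ U₀ = ∅ := Finset.sdiff_eq_empty_iff_subset.mpr hsub
        rw [this] at hne'; exact Finset.not_nonempty_empty hne'
      have hU1 : ((insert a C₀).biUnion fun c => trF T c) = U₀ ∪ ((trF T a) \ U₀) := by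
        rw [Finset.biUnion_insert, Finset.union_comm, Finset.union_sdiff_self_eq_union]
      have hcardU1 : ((insert a C₀).biUnion fun c => trF T c).card
          = U₀.card + ((trF T a) \ U₀).card := by
        rw [hU1, Finset.card_union_of_disjoint Finset.disjoint_sdiff]
      have h1' : ∀ c ∈ insert a C₀, trF T c ⊆ R := by
        intro c hc
        rcases Finset.mem_insert.mp hc with rfl | hc
        · exact haR
        · exact h1 c hc
      have h2' : (1 - ε) * T.card * ((insert a C₀).card : ℝ)
          ≤ (((insert a C₀).biUnion fun c => trF T c).card : ℝ) := by
        rw [Finset.card_insert_of_notMem haC, hcardU1]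
        push_cast
        linarith
      have hdec : (R \ ((insert a C₀).biUnion fun c => trF T c)).card < (R \ U₀).card := by
        apply Finset.card_lt_card
        rw [hU1]
        constructor
        · intro x hx
          obtain ⟨hxR, hxU⟩ := Finset.mem_sdiff.mp hx
          exact Finset.mem_sdiff.mpr ⟨hxR, fun h => hxU (Finset.mem_union_left _ h)⟩
        · intro hcon
          obtain ⟨x, hx⟩ := hne'
          have hxR : x ∈ R := haR (Finset.mem_sdiff.mp hx).1
          have hx1 : x ∈ R \ U₀ := Finset.mem_sdiff.mpr ⟨hxR, (Finset.mem_sdiff.mp hx).2⟩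
          have hx2 := hcon hx1
          exact (Finset.mem_sdiff.mp hx2).2 (Finset.mem_union_right _ hx)
      exact ih _ (lt_of_lt_of_le hdec h3) (insert a C₀) h1' h2' le_rfl
    · push_neg at hex
      refine ⟨C₀, h1, h2, maximal_bound T R U₀ hT ?_⟩
      intro a ha
      have haR : trF T a ⊆ R := trF_subset_iff.mpr ((mem_intF hT).mp ha)
      exact hex a haR

lemma f_biUnion (f : Finset G → ℝ) (hempty : f ∅ = 0)
    (hsub : ∀ E B : Finset G, f (E ∪ B) ≤ f E + f B)
    {ι : Type*} (P : Finset ι) (u : ι → Finset G) :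
    f (P.biUnion u) ≤ ∑ p ∈ P, f (u p) := by
  classical
  induction P using Finset.induction_on with
  | empty => simp [hempty]
  | insert a s hnotmem ih =>
    rw [Finset.biUnion_insert, Finset.sum_insert hnotmem]
    exact le_trans (hsub _ _) (by linarith)

lemma f_card_le (f : Finset G → ℝ) (hempty : f ∅ = 0)
    (hsub : ∀ E B : Finset G, f (E ∪ B) ≤ f E + f B)
    (hinv : ∀ (E : Finset G) (γ : G), f (E.image (· * γ)) = f E)
    (E : Finset G) : f E ≤ f {1} * E.card := by
  classical
  have h1 : E.biUnion (fun x => {x}) = E := Finset.biUnion_singleton_eq_self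
  have h2 : f E ≤ ∑ x ∈ E, f {x} := by
    conv_lhs => rw [← h1]
    exact f_biUnion f hempty hsub E _
  have h3 : ∀ x : G, f ({x} : Finset G) = f {1} := by
    intro x
    have : ({1} : Finset G).image (· * x) = {x} := by simp
    rw [← this, hinv _ x]
  calc f E ≤ ∑ x ∈ E, f {x} := h2
    _ = ∑ _x ∈ E, f {1} := by simp [h3]
    _ = f {1} * E.card := by rw [Finset.sum_const, nsmul_eq_mul]; ring

lemma multi_stage (f : Finset G → ℝ) (hnn : ∀ E : Finset G, 0 ≤ f E) (hempty : f ∅ = 0)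
    (hsub : ∀ E B : Finset G, f (E ∪ B) ≤ f E + f B)
    (hinv : ∀ (E : Finset G) (γ : G), f (E.image (· * γ)) = f E)
    {θ μ : ℝ} (hθ0 : 0 < θ) (hθ1 : θ ≤ 1) (hμ : 0 ≤ μ)
    (k : ℕ) (hk : 1 ≤ (k : ℝ) * ((θ / 16) * θ / 2))
    (S : Fin k → Finset G) (hSne : ∀ i, (S i).Nonempty)
    (hval : ∀ i, f (S i) ≤ μ * ((S i).card : ℝ))
    (hExp : ∀ i j : Fin k, i < j →
      ((mulF (invF (S j)) (S i)).card : ℝ) ≤ (1 + θ / 16) * ((S i).card : ℝ))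
    (A : Finset G)
    (hInv : ∀ i, (1 - θ / 16) * (A.card : ℝ) ≤ ((intF (S i) A).card : ℝ)) :
    f A ≤ μ / (1 - θ / 16) * A.card + f {1} * (θ * A.card) := by
  classical
  set ε : ℝ := θ / 16 with hεdef
  have hε0 : 0 < ε := by positivity
  have hε1 : ε < 1 := by rw [hεdef]; linarith
  have main : ∀ j : ℕ, j ≤ k → ∃ (R : Finset G) (P : Finset (Fin k × G)),
      R ⊆ A ∧ (∀ p ∈ P, (p.1 : ℕ) < j) ∧
      A \ R = P.biUnion (fun p => trF (S p.1) p.2) ∧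
      (1 - ε) * (∑ p ∈ P, ((S p.1).card : ℝ)) ≤ (A.card : ℝ) - R.card ∧
      f A ≤ f R + μ * (∑ p ∈ P, ((S p.1).card : ℝ)) ∧
      ((R.card : ℝ) ≤ θ * A.card ∨ (j : ℝ) * (ε * θ / 2) * A.card ≤ (A.card : ℝ) - R.card) := by
    intro j
    induction j with
    | zero =>
      intro _
      exact ⟨A, ∅, subset_rfl, by simp, by simp, by simp, by simp, Or.inr (by simp)⟩
    | succ j ihj =>
      intro hj1
      have hjk : j < k := Nat.lt_of_succ_le hj1
      obtain ⟨R, P, hRA, hPidx, hcov, hW, hf, hprog⟩ := ihj (Nat.le_of_lt hjk)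
      by_cases hRsmall : (R.card : ℝ) ≤ θ * A.card
      · exact ⟨R, P, hRA, fun p hp => Nat.lt_succ_of_lt (hPidx p hp), hcov, hW, hf,
          Or.inl hRsmall⟩
      · push_neg at hRsmall
        set T := S ⟨j, hjk⟩ with hTdef
        obtain ⟨C, hC1, hC2, hC3⟩ := greedy_cover T R (hSne _) hε0 hε1
        set U := C.biUnion fun c => trF T c with hUdef
        have hUR : U ⊆ R := Finset.biUnion_subset.mpr hC1
        have hRcard : (R.card : ℝ) ≤ A.card := by
          exact_mod_cast Finset.card_le_card hRA
        have hAc0 : (0 : ℝ) ≤ A.card := Nat.cast_nonneg _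
        -- bound on the forbidden set
        have hForb : intF T A \ intF T R ⊆ mulF (invF T) (A \ R) := by
          intro a ha
          obtain ⟨haA, haR⟩ := Finset.mem_sdiff.mp ha
          have h1 : ∀ t ∈ T, t * a ∈ A := (mem_intF (hSne _)).mp haA
          have h2 : ¬ ∀ t ∈ T, t * a ∈ R := fun h => haR ((mem_intF (hSne _)).mpr h)
          push_neg at h2
          obtain ⟨t, ht, htR⟩ := h2
          exact mem_mulF.mpr ⟨t⁻¹, Finset.mem_image_of_mem _ ht, t * a,
            Finset.mem_sdiff.mpr ⟨h1 t ht, htR⟩, by group⟩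
        have hcardForb : ((mulF (invF T) (A \ R)).card : ℝ)
            ≤ (1 + ε) * (∑ p ∈ P, ((S p.1).card : ℝ)) := by
          rw [hcov]
          calc ((mulF (invF T) (P.biUnion fun p => trF (S p.1) p.2)).card : ℝ)
              ≤ ((P.biUnion fun p => mulF (invF T) (trF (S p.1) p.2)).card : ℝ) := by
                exact_mod_cast Finset.card_le_card (mulF_biUnion_subset _ _ _)
            _ ≤ ∑ p ∈ P, ((mulF (invF T) (trF (S p.1) p.2)).card : ℝ) := by
                exact_mod_cast Finset.card_biUnion_le
            _ ≤ ∑ p ∈ P, (1 + ε) * ((S p.1).card : ℝ) := by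
                apply Finset.sum_le_sum
                intro p hp
                rw [mulF_trF, card_trF]
                exact hExp p.1 ⟨j, hjk⟩ (hPidx p hp)
            _ = (1 + ε) * (∑ p ∈ P, ((S p.1).card : ℝ)) := by rw [Finset.mul_sum]
        -- interior of R is large
        have hIntA := hInv ⟨j, hjk⟩
        have hIntsplit : ((intF T A).card : ℝ)
            ≤ ((intF T A \ intF T R).card : ℝ) + ((intF T R).card : ℝ) := by
          exact_mod_cast Finset.card_le_card_sdiff_add_card (s := intF T A) (t := intF T R)
        have hsdcard : ((intF T A \ intF T R).card : ℝ)
            ≤ (1 + ε) * (∑ p ∈ P, ((S p.1).card : ℝ)) :=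
          le_trans (by exact_mod_cast Finset.card_le_card hForb) hcardForb
        have hIntR : (θ / 2) * (A.card : ℝ) ≤ ((intF T R).card : ℝ) := by
          have hWnn : 0 ≤ (∑ p ∈ P, ((S p.1).card : ℝ)) :=
            Finset.sum_nonneg fun p _ => Nat.cast_nonneg _
          have k1 : (1 + ε) * ((1 - ε) * (∑ p ∈ P, ((S p.1).card : ℝ)))
              ≤ (1 + ε) * ((A.card : ℝ) - R.card) :=
            mul_le_mul_of_nonneg_left hW (by linarith)
          have k2 : (1 - ε) * ((intF T A \ intF T R).card : ℝ)
              ≤ (1 - ε) * ((1 + ε) * (∑ p ∈ P, ((S p.1).card : ℝ))) :=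
            mul_le_mul_of_nonneg_left hsdcard (by linarith)
          have k3 : (1 - ε) * ((1 - ε) * (A.card : ℝ)) ≤ (1 - ε) * ((intF T A).card : ℝ) :=
            mul_le_mul_of_nonneg_left hIntA (by linarith)
          have k4 : (1 - ε) * ((intF T A).card : ℝ)
              ≤ (1 - ε) * (((intF T A \ intF T R).card : ℝ) + ((intF T R).card : ℝ)) :=
            mul_le_mul_of_nonneg_left hIntsplit (by linarith)
          have k5 : (1 - ε) * ((θ / 2) * (A.card : ℝ)) ≤ (1 - ε) * ((intF T R).card : ℝ) := by
            nlinarith [mul_nonneg hAc0 (mul_nonneg (le_of_lt hθ0) (le_of_lt hθ0)),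
              mul_nonneg (mul_nonneg hAc0 (le_of_lt hθ0)) (le_of_lt hθ0), hRsmall, hRcard]
          exact le_of_mul_le_mul_left k5 (by linarith)
        have hUbig : ε * ((θ / 2) * (A.card : ℝ)) ≤ (U.card : ℝ) :=
          le_trans (mul_le_mul_of_nonneg_left hIntR (le_of_lt hε0)) hC3
        -- construct next stage
        refine ⟨R \ U, P ∪ C.image (fun c => (⟨j, hjk⟩, c)), ?_, ?_, ?_, ?_, ?_, ?_⟩
        · exact subset_trans (Finset.sdiff_subset) hRA
        · intro p hp
          rcases Finset.mem_union.mp hp with h | h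
          · exact Nat.lt_succ_of_lt (hPidx p h)
          · obtain ⟨c, _, rfl⟩ := Finset.mem_image.mp h
            exact Nat.lt_succ_self j
        · -- covering identity
          have hUA : U ⊆ A := subset_trans hUR hRA
          have e1 : A \ (R \ U) = (A \ R) ∪ U := by
            ext x
            simp only [Finset.mem_sdiff, Finset.mem_union]
            constructor
            · rintro ⟨hxA, hx⟩
              by_cases hxR : x ∈ R
              · right
                by_contra hxU
                exact hx ⟨hxR, hxU⟩
              · exact Or.inl ⟨hxA, hxR⟩
            · rintro (⟨hxA, hxR⟩ | hxU)
              · exact ⟨hxA, fun h => hxR h.1⟩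
              · exact ⟨hUA hxU, fun h => h.2 hxU⟩
          have hbu : (P ∪ C.image (fun c => ((⟨j, hjk⟩ : Fin k), c))).biUnion
              (fun p => trF (S p.1) p.2)
              = P.biUnion (fun p => trF (S p.1) p.2)
                ∪ (C.image (fun c => ((⟨j, hjk⟩ : Fin k), c))).biUnion
                  (fun p => trF (S p.1) p.2) := by
            ext x
            simp only [Finset.mem_biUnion, Finset.mem_union]
            constructor
            · rintro ⟨p, hp | hp, hx⟩
              · exact Or.inl ⟨p, hp, hx⟩
              · exact Or.inr ⟨p, hp, hx⟩
            · rintro (⟨p, hp, hx⟩ | ⟨p, hp, hx⟩)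
              · exact ⟨p, Or.inl hp, hx⟩
              · exact ⟨p, Or.inr hp, hx⟩
          rw [e1, hbu, ← hcov, Finset.image_biUnion]
        · -- weight bound
          have hdisj : Disjoint P (C.image (fun c => (⟨j, hjk⟩, c))) := by
            rw [Finset.disjoint_left]
            intro p hp hpim
            obtain ⟨c, _, rfl⟩ := Finset.mem_image.mp hpim
            exact absurd (hPidx _ hp) (lt_irrefl j)
          have hsum : ∑ p ∈ P ∪ C.image (fun c => (⟨j, hjk⟩, c)), ((S p.1).card : ℝ)
              = (∑ p ∈ P, ((S p.1).card : ℝ)) + C.card * (T.card : ℝ) := by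
            rw [Finset.sum_union hdisj,
              Finset.sum_image (fun a _ b _ h => congrArg Prod.snd h)]
            simp [Finset.sum_const, nsmul_eq_mul, hTdef]
          rw [hsum]
          have hcardRU : ((R \ U).card : ℝ) = (R.card : ℝ) - U.card := by
            rw [Finset.card_sdiff_of_subset hUR]
            have := Finset.card_le_card hUR
            push_cast [Nat.cast_sub this]
            ring
          rw [hcardRU]
          have e2 : (1 - ε) * ((∑ p ∈ P, ((S p.1).card : ℝ)) + C.card * (T.card : ℝ))
              = (1 - ε) * (∑ p ∈ P, ((S p.1).card : ℝ))
                + (1 - ε) * (T.card : ℝ) * C.card := by ring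
          rw [e2]
          linarith [hW, hC2]
        · -- f bound
          have hRsplit : (R \ U) ∪ U = R := Finset.sdiff_union_of_subset hUR
          have hfR : f R ≤ f (R \ U) + f U := by
            calc f R = f ((R \ U) ∪ U) := by rw [hRsplit]
              _ ≤ f (R \ U) + f U := hsub _ _
          have hfU : f U ≤ (C.card : ℝ) * f T := by
            calc f U ≤ ∑ c ∈ C, f (trF T c) := f_biUnion f hempty hsub C _
              _ = ∑ _c ∈ C, f T := by
                  apply Finset.sum_congr rfl
                  intro c _
                  exact hinv T c
              _ = (C.card : ℝ) * f T := by rw [Finset.sum_const, nsmul_eq_mul]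
          have hfT : f T ≤ μ * (T.card : ℝ) := hval _
          have hsum : ∑ p ∈ P ∪ C.image (fun c => (⟨j, hjk⟩, c)), ((S p.1).card : ℝ)
              = (∑ p ∈ P, ((S p.1).card : ℝ)) + C.card * (T.card : ℝ) := by
            have hdisj : Disjoint P (C.image (fun c => (⟨j, hjk⟩, c))) := by
              rw [Finset.disjoint_left]
              intro p hp hpim
              obtain ⟨c, _, rfl⟩ := Finset.mem_image.mp hpim
              exact absurd (hPidx _ hp) (lt_irrefl j)
            rw [Finset.sum_union hdisj,
              Finset.sum_image (fun a _ b _ h => congrArg Prod.snd h)]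
            simp [Finset.sum_const, nsmul_eq_mul, hTdef]
          rw [hsum]
          have hCnn : (0 : ℝ) ≤ C.card := Nat.cast_nonneg _
          have hCT : (C.card : ℝ) * f T ≤ (C.card : ℝ) * (μ * T.card) :=
            mul_le_mul_of_nonneg_left hfT hCnn
          have e3 : μ * ((∑ p ∈ P, ((S p.1).card : ℝ)) + C.card * (T.card : ℝ))
              = μ * (∑ p ∈ P, ((S p.1).card : ℝ)) + (C.card : ℝ) * (μ * T.card) := by ring
          rw [e3]
          linarith [hf, hfR, hfU]
        · -- progress
          right
          have hprev : (j : ℝ) * (ε * θ / 2) * A.card ≤ (A.card : ℝ) - R.card := by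
            rcases hprog with h | h
            · exact absurd h (not_le.mpr hRsmall)
            · exact h
          have hcardRU : ((R \ U).card : ℝ) = (R.card : ℝ) - U.card := by
            rw [Finset.card_sdiff_of_subset hUR]
            have := Finset.card_le_card hUR
            push_cast [Nat.cast_sub this]
            ring
          rw [hcardRU]
          push_cast
          have e4 : ((j : ℝ) + 1) * (ε * θ / 2) * A.card
              = (j : ℝ) * (ε * θ / 2) * A.card + ε * (θ / 2 * (A.card : ℝ)) := by ring
          rw [e4]
          linarith [hUbig, hprev]
  obtain ⟨R, P, hRA, _, _, hW, hf, hprog⟩ := main k le_rfl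
  have hAc0 : (0 : ℝ) ≤ A.card := Nat.cast_nonneg _
  have hRc0 : (0 : ℝ) ≤ R.card := Nat.cast_nonneg _
  have hRcard : (R.card : ℝ) ≤ A.card := by exact_mod_cast Finset.card_le_card hRA
  have hRsmall : (R.card : ℝ) ≤ θ * A.card := by
    rcases hprog with h | h
    · exact h
    · nlinarith [h, hk]
  have hc0 : 0 ≤ f {1} := hnn _
  have hfR : f R ≤ f {1} * R.card := f_card_le f hempty hsub hinv R
  have hWle : (∑ p ∈ P, ((S p.1).card : ℝ)) ≤ (A.card : ℝ) / (1 - ε) := by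
    rw [le_div_iff₀ (by linarith : (0:ℝ) < 1 - ε)]
    linarith [hW]
  calc f A ≤ f R + μ * (∑ p ∈ P, ((S p.1).card : ℝ)) := hf
    _ ≤ f {1} * (θ * A.card) + μ * ((A.card : ℝ) / (1 - ε)) := by
        have h1 := mul_le_mul_of_nonneg_left hWle hμ
        have h2 := mul_le_mul_of_nonneg_left hRsmall hc0
        linarith [hfR]
    _ = μ / (1 - ε) * A.card + f {1} * (θ * A.card) := by ring

/-- boundary count -/
noncomputable def bd (F : Finset G) (γ : G) : ℕ := (F.filter fun x => γ * x ∉ F).card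

section Folner
variable (F : ℕ → Finset G) (hne : ∀ n, (F n).Nonempty)

include hne in
lemma folner_all (H : Finset G) (hHgen : Subgroup.closure (H : Set G) = ⊤)
    (hFolner : Tendsto
      (fun n => (((F n).filter fun γ => ∃ h ∈ H, h * γ ∉ F n).card : ℝ) / ((F n).card : ℝ))
      atTop (nhds 0)) (γ : G) :
    Tendsto (fun n => (bd (F n) γ : ℝ) / ((F n).card : ℝ)) atTop (nhds 0) := by
  have hpos : ∀ n, (0 : ℝ) < (F n).card := fun n => by
    exact_mod_cast Finset.card_pos.mpr (hne n)
  have hnnratio : ∀ (γ : G) (n : ℕ), 0 ≤ (bd (F n) γ : ℝ) / ((F n).card : ℝ) := fun γ n =>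
    div_nonneg (Nat.cast_nonneg _) (le_of_lt (hpos n))
  -- squeeze principle
  have squeeze : ∀ (γ : G) (u : ℕ → ℝ),
      Tendsto u atTop (nhds 0) →
      (∀ n, (bd (F n) γ : ℝ) / ((F n).card : ℝ) ≤ u n) →
      Tendsto (fun n => (bd (F n) γ : ℝ) / ((F n).card : ℝ)) atTop (nhds 0) := by
    intro γ u hu hle
    exact tendsto_of_tendsto_of_tendsto_of_le_of_le tendsto_const_nhds hu
      (fun n => hnnratio γ n) hle
  have key : ∀ γ ∈ Subgroup.closure (H : Set G),
      Tendsto (fun n => (bd (F n) γ : ℝ) / ((F n).card : ℝ)) atTop (nhds 0) := by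
    intro γ hγ
    induction hγ using Subgroup.closure_induction with
    | mem x hx =>
      apply squeeze x _ hFolner
      intro n
      gcongr
      have hsub : (F n).filter (fun z => x * z ∉ F n)
          ⊆ (F n).filter (fun γ' => ∃ h ∈ H, h * γ' ∉ F n) := by
        intro z hz
        obtain ⟨h1, h2⟩ := Finset.mem_filter.mp hz
        exact Finset.mem_filter.mpr ⟨h1, x, hx, h2⟩
      exact_mod_cast Finset.card_le_card hsub
    | one =>
      have : ∀ n, bd (F n) (1 : G) = 0 := by
        intro n
        simp [bd, Finset.filter_eq_empty_iff]
      simp only [this]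
      simpa using tendsto_const_nhds
    | mul x y hx hy ihx ihy =>
      have hbound : ∀ n, (bd (F n) (x * y) : ℝ) ≤ bd (F n) y + bd (F n) x := by
        intro n
        have hsplit : (F n).filter (fun z => (x * y) * z ∉ F n)
            ⊆ ((F n).filter fun z => y * z ∉ F n)
              ∪ ((F n).filter fun z => y * z ∈ F n ∧ x * (y * z) ∉ F n) := by
          intro z hz
          obtain ⟨hzF, hzb⟩ := Finset.mem_filter.mp hz
          by_cases hy' : y * z ∈ F n
          · refine Finset.mem_union_right _ (Finset.mem_filter.mpr ⟨hzF, hy', ?_⟩)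
            rwa [← mul_assoc]
          · exact Finset.mem_union_left _ (Finset.mem_filter.mpr ⟨hzF, hy'⟩)
        have hsecond : ((F n).filter fun z => y * z ∈ F n ∧ x * (y * z) ∉ F n).card
            ≤ ((F n).filter fun z => x * z ∉ F n).card := by
          apply Finset.card_le_card_of_injOn (fun z => y * z)
          · intro z hz
            obtain ⟨hzF, h1, h2⟩ := Finset.mem_filter.mp hz
            exact Finset.mem_filter.mpr ⟨h1, h2⟩
          · intro a _ b _ h
            exact mul_left_cancel h
        have := le_trans (Finset.card_le_card hsplit) (Finset.card_union_le _ _)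
        have h3 : (((F n).filter fun z => y * z ∈ F n ∧ x * (y * z) ∉ F n).card : ℝ)
            ≤ (((F n).filter fun z => x * z ∉ F n).card : ℝ) := by exact_mod_cast hsecond
        have h4 : ((((F n).filter fun z => (x * y) * z ∉ F n)).card : ℝ)
            ≤ (((F n).filter fun z => y * z ∉ F n).card : ℝ)
              + (((F n).filter fun z => y * z ∈ F n ∧ x * (y * z) ∉ F n).card : ℝ) := by
          exact_mod_cast this
        unfold bd
        push_cast
        linarith
      apply squeeze _ (fun n => (bd (F n) y : ℝ) / ((F n).card : ℝ)
        + (bd (F n) x : ℝ) / ((F n).card : ℝ))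
      · simpa using ihy.add ihx
      · intro n
        rw [← add_div]
        gcongr
        exact hbound n
    | inv x hx ihx =>
      have hcard : ∀ n, bd (F n) x⁻¹ = bd (F n) x := by
        intro n
        unfold bd
        have e1 : (F n).filter (fun z => x⁻¹ * z ∉ F n)
            = F n \ (F n).filter (fun z => x⁻¹ * z ∈ F n) := by
          rw [← Finset.filter_not]
        have e2 : (F n).filter (fun z => x * z ∉ F n)
            = F n \ (F n).filter (fun z => x * z ∈ F n) := by
          rw [← Finset.filter_not]
        rw [e1, e2, Finset.card_sdiff_of_subset (Finset.filter_subset _ _),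
          Finset.card_sdiff_of_subset (Finset.filter_subset _ _)]
        congr 1
        -- |{z ∈ F : x⁻¹ z ∈ F}| = |{z ∈ F : x z ∈ F}| via z ↦ x⁻¹ z? map z to x * z?
        apply Finset.card_bij (fun z _ => x⁻¹ * z)
        · intro z hz
          obtain ⟨h1, h2⟩ := Finset.mem_filter.mp hz
          exact Finset.mem_filter.mpr ⟨h2, by simpa using h1⟩
        · intro a ha b hb h
          exact mul_left_cancel h
        · intro z hz
          obtain ⟨h1, h2⟩ := Finset.mem_filter.mp hz
          exact ⟨x * z, Finset.mem_filter.mpr ⟨h2, by simpa using h1⟩, by group⟩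
      simp only [hcard]
      exact ihx
  exact key γ (by rw [hHgen]; trivial)

include hne in
lemma ev_mulF (hb : ∀ γ : G, Tendsto (fun n => (bd (F n) γ : ℝ) / ((F n).card : ℝ))
      atTop (nhds 0)) (K : Finset G) {δ : ℝ} (hδ : 0 < δ) :
    ∀ᶠ n in atTop, ((mulF K (F n)).card : ℝ) ≤ (1 + δ) * ((F n).card : ℝ) := by
  have hsum : Tendsto (fun n => ∑ g ∈ K, (bd (F n) g : ℝ) / ((F n).card : ℝ))
      atTop (nhds 0) := by
    have := tendsto_finset_sum K (fun g (_ : g ∈ K) => hb g)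
    simpa using this
  have hev : ∀ᶠ n in atTop, ∑ g ∈ K, (bd (F n) g : ℝ) / ((F n).card : ℝ) < δ :=
    hsum.eventually_lt_const hδ
  filter_upwards [hev] with n hn
  have hpos : (0 : ℝ) < (F n).card := by exact_mod_cast Finset.card_pos.mpr (hne n)
  have hcard : (mulF K (F n)).card ≤ (F n).card + ∑ g ∈ K, bd (F n) g := by
    have hsub : mulF K (F n) ⊆ F n ∪ K.biUnion
        (fun g => ((F n).filter (fun y => g * y ∉ F n)).image (fun y => g * y)) := by
      intro x hx
      obtain ⟨g, hg, y, hy, rfl⟩ := mem_mulF.mp hx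
      by_cases hmem : g * y ∈ F n
      · exact Finset.mem_union_left _ hmem
      · exact Finset.mem_union_right _ (Finset.mem_biUnion.mpr
          ⟨g, hg, Finset.mem_image_of_mem _ (Finset.mem_filter.mpr ⟨hy, hmem⟩)⟩)
    calc (mulF K (F n)).card ≤ (F n ∪ K.biUnion
          (fun g => ((F n).filter (fun y => g * y ∉ F n)).image (fun y => g * y))).card :=
          Finset.card_le_card hsub
      _ ≤ (F n).card + (K.biUnion
          (fun g => ((F n).filter (fun y => g * y ∉ F n)).image (fun y => g * y))).card :=
          Finset.card_union_le _ _
      _ ≤ (F n).card + ∑ g ∈ K, bd (F n) g := by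
          apply Nat.add_le_add le_rfl
          calc (K.biUnion _).card
              ≤ ∑ g ∈ K, (((F n).filter (fun y => g * y ∉ F n)).image (fun y => g * y)).card :=
              Finset.card_biUnion_le
            _ ≤ ∑ g ∈ K, bd (F n) g :=
              Finset.sum_le_sum fun g _ => Finset.card_image_le
  have hsumb : (∑ g ∈ K, (bd (F n) g : ℝ)) < δ * (F n).card := by
    have : (∑ g ∈ K, (bd (F n) g : ℝ)) / ((F n).card : ℝ) < δ := by
      rw [Finset.sum_div]
      exact hn
    calc (∑ g ∈ K, (bd (F n) g : ℝ))
        = (∑ g ∈ K, (bd (F n) g : ℝ)) / ((F n).card : ℝ) * (F n).card := by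
          field_simp
      _ < δ * (F n).card := by
          exact mul_lt_mul_of_pos_right this hpos
  have hcard' : ((mulF K (F n)).card : ℝ) ≤ ((F n).card : ℝ) + ∑ g ∈ K, (bd (F n) g : ℝ) := by
    exact_mod_cast hcard
  linarith

include hne in
lemma ev_intF (hb : ∀ γ : G, Tendsto (fun n => (bd (F n) γ : ℝ) / ((F n).card : ℝ))
      atTop (nhds 0)) (T : Finset G) (hT : T.Nonempty) {δ : ℝ} (hδ : 0 < δ) :
    ∀ᶠ n in atTop, (1 - δ) * ((F n).card : ℝ) ≤ ((intF T (F n)).card : ℝ) := by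
  obtain ⟨t₀, ht₀⟩ := hT
  have hsum : Tendsto (fun n => ∑ t ∈ T, (bd (F n) (t * t₀⁻¹) : ℝ) / ((F n).card : ℝ))
      atTop (nhds 0) := by
    have := tendsto_finset_sum T (fun t (_ : t ∈ T) => hb (t * t₀⁻¹))
    simpa using this
  have hev : ∀ᶠ n in atTop, ∑ t ∈ T, (bd (F n) (t * t₀⁻¹) : ℝ) / ((F n).card : ℝ) < δ :=
    hsum.eventually_lt_const hδ
  filter_upwards [hev] with n hn
  have hpos : (0 : ℝ) < (F n).card := by exact_mod_cast Finset.card_pos.mpr (hne n)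
  set J := (F n).filter (fun x => ∀ t ∈ T, t * (t₀⁻¹ * x) ∈ F n) with hJ
  have h1 : J.card ≤ (intF T (F n)).card := by
    apply Finset.card_le_card_of_injOn (fun x => t₀⁻¹ * x)
    · intro x hx
      obtain ⟨hxF, hxall⟩ := Finset.mem_filter.mp hx
      exact (mem_intF ⟨t₀, ht₀⟩).mpr hxall
    · intro a _ b _ h
      exact mul_left_cancel h
  have h2 : (F n) \ J ⊆ T.biUnion (fun t => (F n).filter (fun x => (t * t₀⁻¹) * x ∉ F n)) := by
    intro x hx
    obtain ⟨hxF, hxJ⟩ := Finset.mem_sdiff.mp hx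
    have : ¬ ∀ t ∈ T, t * (t₀⁻¹ * x) ∈ F n := fun h => hxJ (Finset.mem_filter.mpr ⟨hxF, h⟩)
    push_neg at this
    obtain ⟨t, ht, htx⟩ := this
    refine Finset.mem_biUnion.mpr ⟨t, ht, Finset.mem_filter.mpr ⟨hxF, ?_⟩⟩
    rwa [mul_assoc]
  have h3 : (F n).card - J.card ≤ ∑ t ∈ T, bd (F n) (t * t₀⁻¹) := by
    have hJsub : J ⊆ F n := Finset.filter_subset _ _
    calc (F n).card - J.card = ((F n) \ J).card := (Finset.card_sdiff_of_subset hJsub).symm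
      _ ≤ (T.biUnion (fun t => (F n).filter (fun x => (t * t₀⁻¹) * x ∉ F n))).card :=
          Finset.card_le_card h2
      _ ≤ ∑ t ∈ T, bd (F n) (t * t₀⁻¹) := Finset.card_biUnion_le
  have hsumb : (∑ t ∈ T, (bd (F n) (t * t₀⁻¹) : ℝ)) < δ * (F n).card := by
    have hlt : (∑ t ∈ T, (bd (F n) (t * t₀⁻¹) : ℝ)) / ((F n).card : ℝ) < δ := by
      rw [Finset.sum_div]
      exact hn
    calc (∑ t ∈ T, (bd (F n) (t * t₀⁻¹) : ℝ))
        = (∑ t ∈ T, (bd (F n) (t * t₀⁻¹) : ℝ)) / ((F n).card : ℝ) * (F n).card := by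
          field_simp
      _ < δ * (F n).card := mul_lt_mul_of_pos_right hlt hpos
  have hJF : J.card ≤ (F n).card := Finset.card_le_card (Finset.filter_subset _ _)
  have h3' : ((F n).card : ℝ) - J.card ≤ ∑ t ∈ T, (bd (F n) (t * t₀⁻¹) : ℝ) := by
    have := h3
    have hcast : (((F n).card - J.card : ℕ) : ℝ) = ((F n).card : ℝ) - J.card := by
      push_cast [Nat.cast_sub hJF]
      ring
    rw [← hcast]
    exact_mod_cast h3
  have h1' : (J.card : ℝ) ≤ ((intF T (F n)).card : ℝ) := by exact_mod_cast h1
  linarith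

end Folner

theorem ow_abstract (F : ℕ → Finset G) (hne : ∀ n, (F n).Nonempty)
    (hb : ∀ γ : G, Tendsto (fun n => (bd (F n) γ : ℝ) / ((F n).card : ℝ)) atTop (nhds 0))
    (f : Finset G → ℝ) (hnn : ∀ E : Finset G, 0 ≤ f E) (hempty : f ∅ = 0)
    (hsub : ∀ E B : Finset G, f (E ∪ B) ≤ f E + f B)
    (hinv : ∀ (E : Finset G) (γ : G), f (E.image (· * γ)) = f E) :
    ∃ L : ℝ, Tendsto (fun n => f (F n) / ((F n).card : ℝ)) atTop (nhds L) := by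
  classical
  set u : ℕ → ℝ := fun n => f (F n) / ((F n).card : ℝ) with hu
  set c : ℝ := f {1} with hc
  have hc0 : 0 ≤ c := hnn _
  have hpos : ∀ n, (0 : ℝ) < (F n).card := fun n => by
    exact_mod_cast Finset.card_pos.mpr (hne n)
  have hu0 : ∀ n, 0 ≤ u n := fun n => div_nonneg (hnn _) (hpos n).le
  have huc : ∀ n, u n ≤ c := by
    intro n
    rw [hu, div_le_iff₀ (hpos n)]
    calc f (F n) ≤ f {1} * (F n).card := f_card_le f hempty hsub hinv (F n)
      _ = c * (F n).card := by rw [hc]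
  have hbddabove : IsBoundedUnder (· ≤ ·) atTop u := Filter.isBoundedUnder_of ⟨c, huc⟩
  have hbddbelow : IsBoundedUnder (· ≥ ·) atTop u := Filter.isBoundedUnder_of ⟨0, hu0⟩
  set lam : ℝ := liminf u atTop with hlam
  have hlam0 : 0 ≤ lam := by
    apply Filter.le_liminf_of_le hbddabove.isCoboundedUnder_ge
    exact Filter.Eventually.of_forall hu0
  have hlamc : lam ≤ c := by
    apply Filter.liminf_le_of_le hbddbelow
    intro b hb
    obtain ⟨n, hn⟩ := hb.exists
    exact hn.trans (huc n)
  -- tile lists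
  have tile_list : ∀ (μ δ : ℝ), lam < μ → 0 < δ → ∀ t : ℕ,
      ∃ Sl : List (Finset G), Sl.length = t ∧
        (∀ T ∈ Sl, T.Nonempty ∧ f T ≤ μ * (T.card : ℝ)) ∧
        List.Pairwise (fun A B : Finset G =>
          ((mulF (invF B) A).card : ℝ) ≤ (1 + δ) * (A.card : ℝ)) Sl := by
    intro μ δ hμlam hδ
    intro t
    induction t with
    | zero => exact ⟨[], rfl, by simp, by simp⟩
    | succ t ih =>
      obtain ⟨Sl, hlen, hmem, hpair⟩ := ih
      -- eventually all expansion conditions for list members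
      have hev : ∀ᶠ n in atTop, ∀ B ∈ Sl,
          ((mulF (invF B) (F n)).card : ℝ) ≤ (1 + δ) * ((F n).card : ℝ) := by
        clear hpair hmem hlen
        induction Sl with
        | nil => exact Filter.Eventually.of_forall (by simp)
        | cons B l ihl =>
          have h1 := ev_mulF F hne hb (invF B) hδ
          filter_upwards [h1, ihl] with n hn1 hn2
          intro B' hB'
          rcases List.mem_cons.mp hB' with rfl | hB'
          · exact hn1
          · exact hn2 B' hB'
      have hfreq : ∃ᶠ n in atTop, u n < μ :=
        Filter.frequently_lt_of_liminf_lt hbddabove.isCoboundedUnder_ge hμlam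
      obtain ⟨n, hn1, hn2⟩ := (hfreq.and_eventually hev).exists
      refine ⟨F n :: Sl, by simp [hlen], ?_, ?_⟩
      · intro T hT
        rcases List.mem_cons.mp hT with rfl | hT
        · refine ⟨hne n, ?_⟩
          have := (div_lt_iff₀ (hpos n)).mp hn1
          linarith
        · exact hmem T hT
      · exact List.Pairwise.cons (fun B hB => hn2 B hB) hpair
  -- main eventual estimate
  have main : ∀ η : ℝ, 0 < η → η ≤ 1 → ∀ᶠ m in atTop, u m ≤ lam + η := by
    intro η hη0 hη1
    set θ : ℝ := min (η / (4 * (c + 1))) (1/4) with hθ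
    have hc1 : (0:ℝ) < c + 1 := by linarith
    have hθ0 : 0 < θ := lt_min (by positivity) (by norm_num)
    have hθ1 : θ ≤ 1 := le_trans (min_le_right _ _) (by norm_num)
    have hθ4 : θ ≤ 1/4 := min_le_right _ _
    have hθη : θ * (4 * (c + 1)) ≤ η := by
      have h1 : θ ≤ η / (4 * (c + 1)) := min_le_left _ _
      rw [← le_div_iff₀ (by positivity)]
      exact h1
    set μ : ℝ := lam + η / 4 with hμ
    have hμ0 : 0 ≤ μ := by rw [hμ]; linarith
    have hμc : μ ≤ c + 1 := by rw [hμ]; linarith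
    set k : ℕ := ⌈(32 : ℝ) / θ ^ 2⌉₊ with hkdef
    have hk : 1 ≤ (k : ℝ) * ((θ / 16) * θ / 2) := by
      have h1 : (32 : ℝ) / θ ^ 2 ≤ k := Nat.le_ceil _
      have h2 : (0:ℝ) < θ ^ 2 := by positivity
      have h3 : (32 : ℝ) / θ ^ 2 * ((θ / 16) * θ / 2) = 1 := by
        field_simp
        ring
      calc (1:ℝ) = (32 : ℝ) / θ ^ 2 * ((θ / 16) * θ / 2) := h3.symm
        _ ≤ (k : ℝ) * ((θ / 16) * θ / 2) := by
            apply mul_le_mul_of_nonneg_right h1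
            positivity
    obtain ⟨Sl, hlen, hmem, hpair⟩ := tile_list μ (θ/16) (by rw [hμ]; linarith) (by positivity) k
    set S : Fin k → Finset G := fun i => Sl.get (Fin.cast hlen.symm i) with hS
    have hSmem : ∀ i, S i ∈ Sl := fun i => List.get_mem _ _
    have hSne : ∀ i, (S i).Nonempty := fun i => (hmem _ (hSmem i)).1
    have hval : ∀ i, f (S i) ≤ μ * ((S i).card : ℝ) := fun i => (hmem _ (hSmem i)).2
    have hExp : ∀ i j : Fin k, i < j →
        ((mulF (invF (S j)) (S i)).card : ℝ) ≤ (1 + θ/16) * ((S i).card : ℝ) := by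
      intro i j hij
      have := List.pairwise_iff_get.mp hpair (Fin.cast hlen.symm i) (Fin.cast hlen.symm j)
        (by simpa using hij)
      exact this
    -- eventual invariance of F m w.r.t. all tiles
    have hinvev : ∀ᶠ m in atTop, ∀ i : Fin k,
        (1 - θ/16) * ((F m).card : ℝ) ≤ ((intF (S i) (F m)).card : ℝ) := by
      rw [Filter.eventually_all]
      intro i
      exact ev_intF F hne hb (S i) (hSne i) (by positivity)
    filter_upwards [hinvev] with m hm
    have hest := multi_stage f hnn hempty hsub hinv hθ0 hθ1 hμ0 k hk S hSne hval hExp (F m) hm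
    rw [hu, div_le_iff₀ (hpos m)]
    have hdiv : μ / (1 - θ/16) ≤ μ * (1 + 2 * (θ/16)) := by
      rw [div_le_iff₀ (by linarith : (0:ℝ) < 1 - θ/16)]
      nlinarith
    have harith : μ * (1 + 2 * (θ/16)) + c * θ ≤ lam + η := by
      nlinarith [hμc, hθη, hc1, hθ0.le, hlam0]
    calc f (F m) ≤ μ / (1 - θ/16) * (F m).card + c * (θ * (F m).card) := hest
      _ ≤ (lam + η) * (F m).card := by nlinarith [hpos m, hdiv, harith, hθ0.le, hc0]
  -- conclude
  have hlimsup : limsup u atTop ≤ lam := by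
    apply le_of_forall_pos_le_add
    intro ε hε
    have hη : 0 < min ε 1 := lt_min hε one_pos
    have h1 : limsup u atTop ≤ lam + min ε 1 := by
      apply Filter.limsup_le_of_le hbddbelow.isCoboundedUnder_le
      exact main (min ε 1) hη (min_le_right _ _)
    exact le_trans h1 (by linarith [min_le_left ε (1:ℝ)])
  have hlele : lam ≤ limsup u atTop := Filter.liminf_le_limsup hbddabove hbddbelow
  exact ⟨lam, tendsto_of_liminf_eq_limsup rfl (le_antisymm hlimsup hlele) hbddabove hbddbelow⟩

end FinsetGroup

section S0Lemmas
variable {Γ : Type*} (ρ : Γ → (V ≃ₜ V)) (α : Finset (Set V))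

/-- the defining set for S0 -/
def S0set (β : Finset (Set V)) : Set ℕ :=
  {n | ∃ δ : Finset (Set V), IsFinOpenCover δ ∧ Refines δ β ∧ δ.card = n}

lemma S0_eq_sInf (β : Finset (Set V)) : S0 β = sInf (S0set β) := rfl

lemma cover_exists (hα : IsFinOpenCover α) (v : V) : ∃ A ∈ α, v ∈ A := by
  have hv : v ∈ ⋃₀ (α : Set (Set V)) := by rw [hα.2]; trivial
  obtain ⟨A, hA, hvA⟩ := hv
  exact ⟨A, hA, hvA⟩

lemma pullCover_isCover (hα : IsFinOpenCover α) (F : Finset Γ) :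
    IsFinOpenCover (pullCover ρ F α) := by
  constructor
  · intro X hX
    obtain ⟨c, hc, rfl⟩ := Finset.mem_image.mp hX
    have hrepr : (⋂ γ, ⋂ (h : γ ∈ F), (ρ γ : V → V) ⁻¹' c γ h)
        = ⋂ γ ∈ F, (fun γ' => if h : γ' ∈ F then (ρ γ' : V → V) ⁻¹' c γ' h else Set.univ) γ := by
      apply Set.iInter_congr
      intro γ
      apply Set.iInter_congr
      intro h
      simp [h]
    rw [hrepr]
    apply isOpen_biInter_finset
    intro γ hγ
    simp only [hγ, dif_pos]
    exact (Homeomorph.continuous (ρ γ)).isOpen_preimage _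
      ((hα.1 _ ((Finset.mem_pi.mp hc) γ hγ)))
  · apply Set.eq_univ_of_forall
    intro v
    have hch : ∀ γ : Γ, ∃ A ∈ α, (ρ γ : V → V) v ∈ A := fun γ => cover_exists α hα _
    choose g hg1 hg2 using hch
    refine Set.mem_sUnion.mpr ⟨⋂ γ, ⋂ (h : γ ∈ F), (ρ γ : V → V) ⁻¹' g γ, ?_, ?_⟩
    · apply Finset.mem_coe.mpr
      exact Finset.mem_image.mpr ⟨fun γ _ => g γ, Finset.mem_pi.mpr fun γ _ => hg1 γ, rfl⟩
    · exact Set.mem_iInter.mpr fun γ => Set.mem_iInter.mpr fun h => hg2 γ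

lemma pullCover_mem_S0set (hα : IsFinOpenCover α) (F : Finset Γ) :
    (pullCover ρ F α).card ∈ S0set (pullCover ρ F α) :=
  ⟨pullCover ρ F α, pullCover_isCover ρ α hα F, fun B hB => ⟨B, hB, subset_rfl⟩, rfl⟩

lemma S0set_nonempty (hα : IsFinOpenCover α) (F : Finset Γ) :
    (S0set (pullCover ρ F α)).Nonempty :=
  ⟨_, pullCover_mem_S0set ρ α hα F⟩

lemma S0_pull_pos (hV : Nonempty V) (hα : IsFinOpenCover α) (F : Finset Γ) :
    1 ≤ S0 (pullCover ρ F α) := by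
  rw [Nat.one_le_iff_ne_zero]
  intro h0
  rcases Nat.sInf_eq_zero.mp h0 with hmem | hempty
  · obtain ⟨δ, hδcov, -, hδcard⟩ := hmem
    rw [Finset.card_eq_zero] at hδcard
    subst hδcard
    have := hδcov.2
    simp only [Finset.coe_empty, Set.sUnion_empty] at this
    obtain ⟨v⟩ := hV
    have hv : v ∈ (∅ : Set V) := this.symm ▸ Set.mem_univ v
    exact hv
  · exact absurd hempty (Set.nonempty_iff_ne_empty.mp (S0set_nonempty ρ α hα F))

lemma S0_pull_empty (hV : Nonempty V) (hα : IsFinOpenCover α) :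
    S0 (pullCover ρ (∅ : Finset Γ) α) = 1 := by
  apply le_antisymm
  · apply Nat.sInf_le
    refine ⟨{Set.univ}, ⟨by simp [isOpen_univ], by simp⟩, ?_, by simp⟩
    intro B hB
    rw [Finset.mem_singleton] at hB
    subst hB
    refine ⟨⋂ γ, ⋂ (h : γ ∈ (∅ : Finset Γ)), (ρ γ : V → V) ⁻¹' (fun γ h =>
      absurd h (Finset.notMem_empty γ) : ∀ γ ∈ (∅ : Finset Γ), Set V) γ h, ?_, ?_⟩
    · exact Finset.mem_image.mpr ⟨_, Finset.mem_pi.mpr fun γ h =>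
        absurd h (Finset.notMem_empty γ), rfl⟩
    · intro v _
      exact Set.mem_iInter.mpr fun γ => Set.mem_iInter.mpr fun h =>
        absurd h (Finset.notMem_empty γ)
  · exact S0_pull_pos ρ α hV hα ∅

lemma S0_pull_subadd (hα : IsFinOpenCover α) (E B : Finset Γ) :
    S0 (pullCover ρ (E ∪ B) α) ≤ S0 (pullCover ρ E α) * S0 (pullCover ρ B α) := by
  obtain ⟨δ, hδcov, hδref, hδcard⟩ := Nat.sInf_mem (S0set_nonempty ρ α hα E)
  obtain ⟨η, hηcov, hηref, hηcard⟩ := Nat.sInf_mem (S0set_nonempty ρ α hα B)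
  set ζ := (δ ×ˢ η).image (fun p => p.1 ∩ p.2) with hζ
  have hζcov : IsFinOpenCover ζ := by
    constructor
    · intro X hX
      obtain ⟨p, hp, rfl⟩ := Finset.mem_image.mp hX
      obtain ⟨h1, h2⟩ := Finset.mem_product.mp hp
      exact (hδcov.1 _ h1).inter (hηcov.1 _ h2)
    · apply Set.eq_univ_of_forall
      intro v
      obtain ⟨D, hD, hvD⟩ := cover_exists δ hδcov v
      obtain ⟨E', hE', hvE'⟩ := cover_exists η hηcov v
      exact Set.mem_sUnion.mpr ⟨D ∩ E', Finset.mem_coe.mpr (Finset.mem_image.mpr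
        ⟨(D, E'), Finset.mem_product.mpr ⟨hD, hE'⟩, rfl⟩), hvD, hvE'⟩
  have hζref : Refines ζ (pullCover ρ (E ∪ B) α) := by
    intro X hX
    obtain ⟨p, hp, rfl⟩ := Finset.mem_image.mp hX
    obtain ⟨h1, h2⟩ := Finset.mem_product.mp hp
    obtain ⟨XD, hXD, hDsub⟩ := hδref p.1 h1
    obtain ⟨XE, hXE, hEsub⟩ := hηref p.2 h2
    obtain ⟨c1, hc1, rfl⟩ := Finset.mem_image.mp hXD
    obtain ⟨c2, hc2, rfl⟩ := Finset.mem_image.mp hXE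
    set c : ∀ γ ∈ E ∪ B, Set V := fun γ h =>
      if hE : γ ∈ E then c1 γ hE else c2 γ ((Finset.mem_union.mp h).resolve_left hE) with hcdef
    refine ⟨⋂ γ, ⋂ (h : γ ∈ E ∪ B), (ρ γ : V → V) ⁻¹' c γ h, ?_, ?_⟩
    · apply Finset.mem_image.mpr
      refine ⟨c, Finset.mem_pi.mpr ?_, rfl⟩
      intro γ h
      by_cases hE : γ ∈ E
      · simp only [hcdef, dif_pos hE]
        exact Finset.mem_pi.mp hc1 γ hE
      · simp only [hcdef, dif_neg hE]
        exact Finset.mem_pi.mp hc2 γ _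
    · intro v hv
      obtain ⟨hv1, hv2⟩ := hv
      apply Set.mem_iInter.mpr
      intro γ
      apply Set.mem_iInter.mpr
      intro h
      by_cases hE : γ ∈ E
      · have := Set.mem_iInter.mp (Set.mem_iInter.mp (hDsub hv1) γ) hE
        simp only [hcdef, dif_pos hE]
        exact this
      · have hB' : γ ∈ B := (Finset.mem_union.mp h).resolve_left hE
        have := Set.mem_iInter.mp (Set.mem_iInter.mp (hEsub hv2) γ) hB'
        simp only [hcdef, dif_neg hE]
        exact this
  calc S0 (pullCover ρ (E ∪ B) α) ≤ ζ.card := Nat.sInf_le ⟨ζ, hζcov, hζref, rfl⟩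
    _ ≤ (δ ×ˢ η).card := Finset.card_image_le
    _ = δ.card * η.card := Finset.card_product _ _
    _ = S0 (pullCover ρ E α) * S0 (pullCover ρ B α) := by
        rw [hδcard, hηcard]; rfl

variable [Group Γ]

lemma S0_pull_le_dir1 (hα : IsFinOpenCover α)
    (hρmul : ∀ γ γ' v, ρ (γ * γ') v = ρ γ (ρ γ' v)) (E : Finset Γ) (γ : Γ) :
    S0 (pullCover ρ (E.image (· * γ)) α) ≤ S0 (pullCover ρ E α) := by
  obtain ⟨δ, hδcov, hδref, hδcard⟩ := Nat.sInf_mem (S0set_nonempty ρ α hα E)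
  set g : V → V := (ρ γ : V → V) with hg
  set δ' := δ.image (fun X => g ⁻¹' X) with hδ'
  have hδ'cov : IsFinOpenCover δ' := by
    constructor
    · intro X hX
      obtain ⟨D, hD, rfl⟩ := Finset.mem_image.mp hX
      exact (Homeomorph.continuous (ρ γ)).isOpen_preimage _ (hδcov.1 D hD)
    · apply Set.eq_univ_of_forall
      intro v
      obtain ⟨D, hD, hvD⟩ := cover_exists δ hδcov (g v)
      exact Set.mem_sUnion.mpr ⟨g ⁻¹' D, Finset.mem_coe.mpr
        (Finset.mem_image.mpr ⟨D, hD, rfl⟩), hvD⟩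
  have hδ'ref : Refines δ' (pullCover ρ (E.image (· * γ)) α) := by
    intro D' hD'
    obtain ⟨D, hD, rfl⟩ := Finset.mem_image.mp hD'
    obtain ⟨Y, hY, hDY⟩ := hδref D hD
    obtain ⟨c', hc', rfl⟩ := Finset.mem_image.mp hY
    have hpf : ∀ x ∈ E.image (· * γ), x * γ⁻¹ ∈ E := by
      intro x hx
      obtain ⟨y, hy, rfl⟩ := Finset.mem_image.mp hx
      simpa using hy
    refine ⟨⋂ x, ⋂ (hx : x ∈ E.image (· * γ)), (ρ x : V → V) ⁻¹' c' (x * γ⁻¹) (hpf x hx),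
      ?_, ?_⟩
    · exact Finset.mem_image.mpr ⟨fun x hx => c' (x * γ⁻¹) (hpf x hx),
        Finset.mem_pi.mpr fun x hx => Finset.mem_pi.mp hc' _ _, rfl⟩
    · intro v hv
      have hgv := hDY hv
      apply Set.mem_iInter.mpr
      intro x
      apply Set.mem_iInter.mpr
      intro hx
      have h2 := Set.mem_iInter.mp (Set.mem_iInter.mp hgv (x * γ⁻¹)) (hpf x hx)
      have e : (ρ x : V → V) v = (ρ (x * γ⁻¹) : V → V) (g v) := by
        rw [hg, ← hρmul]
        congr 1
        group
      show (ρ x : V → V) v ∈ c' (x * γ⁻¹) (hpf x hx)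
      rw [e]
      exact h2
  calc S0 (pullCover ρ (E.image (· * γ)) α) ≤ δ'.card := Nat.sInf_le ⟨δ', hδ'cov, hδ'ref, rfl⟩
    _ ≤ δ.card := Finset.card_image_le
    _ = S0 (pullCover ρ E α) := hδcard

lemma S0_pull_le_dir2 (hα : IsFinOpenCover α)
    (hρmul : ∀ γ γ' v, ρ (γ * γ') v = ρ γ (ρ γ' v)) (E : Finset Γ) (γ : Γ) :
    S0 (pullCover ρ E α) ≤ S0 (pullCover ρ (E.image (· * γ)) α) := by
  obtain ⟨δ, hδcov, hδref, hδcard⟩ := Nat.sInf_mem (S0set_nonempty ρ α hα (E.image (· * γ)))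
  set g : V → V := ((ρ γ).symm : V → V) with hg
  set δ' := δ.image (fun X => g ⁻¹' X) with hδ'
  have hδ'cov : IsFinOpenCover δ' := by
    constructor
    · intro X hX
      obtain ⟨D, hD, rfl⟩ := Finset.mem_image.mp hX
      exact (Homeomorph.continuous (ρ γ).symm).isOpen_preimage _ (hδcov.1 D hD)
    · apply Set.eq_univ_of_forall
      intro v
      obtain ⟨D, hD, hvD⟩ := cover_exists δ hδcov (g v)
      exact Set.mem_sUnion.mpr ⟨g ⁻¹' D, Finset.mem_coe.mpr
        (Finset.mem_image.mpr ⟨D, hD, rfl⟩), hvD⟩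
  have hδ'ref : Refines δ' (pullCover ρ E α) := by
    intro D' hD'
    obtain ⟨D, hD, rfl⟩ := Finset.mem_image.mp hD'
    obtain ⟨Y, hY, hDY⟩ := hδref D hD
    obtain ⟨c, hc, rfl⟩ := Finset.mem_image.mp hY
    refine ⟨⋂ y, ⋂ (hy : y ∈ E), (ρ y : V → V) ⁻¹' c (y * γ) (Finset.mem_image_of_mem _ hy),
      ?_, ?_⟩
    · exact Finset.mem_image.mpr ⟨fun y hy => c (y * γ) (Finset.mem_image_of_mem _ hy),
        Finset.mem_pi.mpr fun y hy => Finset.mem_pi.mp hc _ _, rfl⟩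
    · intro v hv
      have hgv := hDY hv
      apply Set.mem_iInter.mpr
      intro y
      apply Set.mem_iInter.mpr
      intro hy
      have h2 := Set.mem_iInter.mp (Set.mem_iInter.mp hgv (y * γ))
        (Finset.mem_image_of_mem _ hy)
      have e : (ρ y : V → V) v = (ρ (y * γ) : V → V) (g v) := by
        rw [hρmul y γ]
        congr 1
        rw [hg]
        exact (Homeomorph.apply_symm_apply (ρ γ) v).symm
      show (ρ y : V → V) v ∈ c (y * γ) (Finset.mem_image_of_mem _ hy)
      rw [e]
      exact h2
  calc S0 (pullCover ρ E α) ≤ δ'.card := Nat.sInf_le ⟨δ', hδ'cov, hδ'ref, rfl⟩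
    _ ≤ δ.card := Finset.card_image_le
    _ = S0 (pullCover ρ (E.image (· * γ)) α) := hδcard

lemma S0_pull_inv (hα : IsFinOpenCover α)
    (hρmul : ∀ γ γ' v, ρ (γ * γ') v = ρ γ (ρ γ' v)) (E : Finset Γ) (γ : Γ) :
    S0 (pullCover ρ (E.image (· * γ)) α) = S0 (pullCover ρ E α) :=
  le_antisymm (S0_pull_le_dir1 ρ α hα hρmul E γ) (S0_pull_le_dir2 ρ α hα hρmul E γ)

end S0Lemmas

/-- Ornstein–Weiss: for a finitely generated amenable group `Γ` acting by
homeomorphisms on a compact Hausdorff space `V`, and a finite open cover `α`,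
the limit `lim_n log S₀(α_{F n}) / |F n|` along a Følner sequence exists. -/
theorem ornstein_weiss_limit_exists {Γ : Type*} [Group Γ]
    (H : Finset Γ) (hHgen : Subgroup.closure (H : Set Γ) = ⊤) (hHinv : ∀ h ∈ H, h⁻¹ ∈ H)
    (F : ℕ → Finset Γ) (hmono : Monotone F) (hexh : ∀ γ : Γ, ∃ n, γ ∈ F n)
    (hne : ∀ n, (F n).Nonempty)
    (hFolner : Filter.Tendsto
      (fun n => (((F n).filter fun γ => ∃ h ∈ H, h * γ ∉ F n).card : ℝ) / ((F n).card : ℝ))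
      Filter.atTop (nhds 0))
    {V : Type*} [TopologicalSpace V] [CompactSpace V] [T2Space V]
    (ρ : Γ → (V ≃ₜ V))
    (hρone : ∀ v, ρ 1 v = v) (hρmul : ∀ γ γ' v, ρ (γ * γ') v = ρ γ (ρ γ' v))
    (α : Finset (Set V)) (hα : IsFinOpenCover α) :
    ∃ L : ℝ, Filter.Tendsto
      (fun n => Real.log (S0 (pullCover ρ (F n) α)) / ((F n).card : ℝ))
      Filter.atTop (nhds L) := by
  classical
  by_cases hV : Nonempty V
  · set f : Finset Γ → ℝ := fun E => Real.log (S0 (pullCover ρ E α)) with hfdef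
    have hpos : ∀ E : Finset Γ, 1 ≤ S0 (pullCover ρ E α) := S0_pull_pos ρ α hV hα
    have hposR : ∀ E : Finset Γ, (0 : ℝ) < (S0 (pullCover ρ E α) : ℝ) := fun E => by
      exact_mod_cast lt_of_lt_of_le one_pos (hpos E)
    have hnn : ∀ E : Finset Γ, 0 ≤ f E := fun E =>
      Real.log_nonneg (by exact_mod_cast hpos E)
    have hfempty : f ∅ = 0 := by
      rw [hfdef]
      simp only [S0_pull_empty ρ α hV hα]
      simp
    have hfsub : ∀ E B : Finset Γ, f (E ∪ B) ≤ f E + f B := by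
      intro E B
      rw [hfdef]
      have h1 := S0_pull_subadd ρ α hα E B
      have h2 : (S0 (pullCover ρ (E ∪ B) α) : ℝ)
          ≤ (S0 (pullCover ρ E α) : ℝ) * (S0 (pullCover ρ B α) : ℝ) := by
        exact_mod_cast h1
      calc Real.log (S0 (pullCover ρ (E ∪ B) α))
          ≤ Real.log ((S0 (pullCover ρ E α) : ℝ) * (S0 (pullCover ρ B α) : ℝ)) :=
            Real.log_le_log (hposR _) h2
        _ = Real.log (S0 (pullCover ρ E α)) + Real.log (S0 (pullCover ρ B α)) :=
            Real.log_mul (ne_of_gt (hposR E)) (ne_of_gt (hposR B))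
    have hfinv : ∀ (E : Finset Γ) (γ : Γ), f (E.image (· * γ)) = f E := by
      intro E γ
      rw [hfdef]
      simp only [S0_pull_inv ρ α hα hρmul E γ]
    have hb := folner_all F hne H hHgen hFolner
    exact ow_abstract F hne hb f hnn hfempty hfsub hfinv
  · have hS0 : ∀ n, S0 (pullCover ρ (F n) α) = 0 := by
      intro n
      apply Nat.sInf_eq_zero.mpr
      left
      refine ⟨∅, ⟨by simp, ?_⟩, by intro B hB; simp at hB, Finset.card_empty⟩
      have : (Set.univ : Set V) = ∅ := Set.univ_eq_empty_iff.mpr (not_nonempty_iff.mp hV)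
      simp [this]
    refine ⟨0, ?_⟩
    have heq : (fun n => Real.log (S0 (pullCover ρ (F n) α)) / ((F n).card : ℝ))
        = fun _ => (0 : ℝ) := by
      funext n
      rw [hS0 n]
      simp
    rw [heq]
    exact tendsto_const_nhds
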